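/- Let α ∈ (0,1), B(α) = 1 − α + α/Γ(α), and let u : [0,∞) → ℝ be continuously differentiable with u and u′ of exponential order (there exist M, c > 0 with |u(t)| ≤ M e^{ct} and |u′(t)| ≤ M e^{ct} for all t ≥ 0). Then for every real p with p > c and p^α > α/(1−α), the Laplace transform of the Atangana–Baleanu–Caputo derivative of u satisfies ∫_0^∞ e^{−pt} (ABC D^α u)(t) dt = B(α) · (p^α ũ(p) − p^{α−1} u(0)) / ((1−α) p^α + α), where ũ(p) = ∫_0^∞ e^{−pt} u(t) dt. -/

import Mathlib

open Set MeasureTheory intervalIntegral Real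
open Filter
set_option maxHeartbeats 1000000

lemma summable_ml {α : ℝ} (hα : α ∈ Set.Ioo (0:ℝ) 1) {x : ℝ} (hx : 0 ≤ x) :
    Summable (fun k : ℕ => x ^ k / Real.Gamma (α * k + 1)) := by
  rcases eq_or_lt_of_le hx with rfl | hx
  · apply summable_of_ne_finset_zero (s := {0})
    intro k hk
    simp [zero_pow (by simpa using hk)]
  have hα0 := hα.1
  have hα1 := hα.2
  have key : ∀ y : ℝ, 1 ≤ y → y * Real.Gamma y ≤ Real.Gamma (y + α) * (y + α) ^ (1 - α) := by
    intro y hy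
    have hy0 : 0 < y := lt_of_lt_of_le one_pos hy
    have hyα : 0 < y + α := by linarith
    have h1 : Real.log (Real.Gamma (y + 1)) ≤
        α * Real.log (Real.Gamma (y + α)) + (1 - α) * Real.log (Real.Gamma (y + α + 1)) := by
      have := Real.convexOn_log_Gamma.2 (mem_Ioi.2 hyα) (mem_Ioi.2 (by linarith : (0:ℝ) < y + α + 1))
        hα0.le (by linarith : (0:ℝ) ≤ 1 - α) (by ring)
      simpa [smul_eq_mul, Function.comp, show α * (y + α) + (1 - α) * (y + α + 1) = y + 1 by ring]
        using this
    have hG : 0 < Real.Gamma (y + α) := Real.Gamma_pos_of_pos hyα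
    have hG1 : Real.Gamma (y + α + 1) = (y + α) * Real.Gamma (y + α) :=
      Real.Gamma_add_one hyα.ne'
    have h2 : Real.log (Real.Gamma (y + 1)) ≤
        Real.log (Real.Gamma (y + α) * (y + α) ^ (1 - α)) := by
      rw [Real.log_mul hG.ne' (Real.rpow_pos_of_pos hyα _).ne', Real.log_rpow hyα]
      rw [hG1, Real.log_mul hyα.ne' hG.ne'] at h1
      nlinarith [h1]
    have h3 : Real.Gamma (y + 1) ≤ Real.Gamma (y + α) * (y + α) ^ (1 - α) :=
      (Real.log_le_log_iff (Real.Gamma_pos_of_pos (by linarith : (0:ℝ) < y + 1))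
        (by positivity)).1 h2
    rwa [Real.Gamma_add_one hy0.ne'] at h3
  -- ratio test
  apply summable_of_ratio_norm_eventually_le (show (1:ℝ)/2 < 1 by norm_num)
  have htend : Filter.Tendsto (fun k : ℕ => 4 * x * (α * k + 1) ^ (-α)) Filter.atTop (nhds 0) := by
    have t1 : Filter.Tendsto (fun k : ℕ => α * (k:ℝ) + 1) Filter.atTop Filter.atTop := by
      apply Filter.tendsto_atTop_add_const_right
      exact (tendsto_natCast_atTop_atTop).const_mul_atTop hα0
    have t2 := (tendsto_rpow_neg_atTop hα0).comp t1
    have := t2.const_mul (4 * x)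
    simpa using this
  have hev := htend.eventually_lt_const (show (0:ℝ) < 1/2 by norm_num)
  filter_upwards [hev] with k hk
  set y : ℝ := α * k + 1 with hy_def
  have hy1 : 1 ≤ y := by
    have : (0:ℝ) ≤ α * k := by positivity
    simp [hy_def]; linarith
  have hy0 : 0 < y := lt_of_lt_of_le one_pos hy1
  have hyα : 0 < y + α := by linarith
  have hG : 0 < Real.Gamma y := Real.Gamma_pos_of_pos hy0
  have hGα : 0 < Real.Gamma (y + α) := Real.Gamma_pos_of_pos hyα
  have hkey := key y hy1
  -- bound (y+α)^(1-α) ≤ 2 * y^(1-α) and y^(1-α) = y * y^(-α)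
  have hb1 : (y + α) ^ (1 - α) ≤ 2 * (y * y ^ (-α)) := by
    have h2y : y + α ≤ 2 * y := by linarith
    have : (y + α) ^ (1 - α) ≤ (2*y) ^ (1 - α) :=
      Real.rpow_le_rpow hyα.le h2y (by linarith)
    rw [Real.mul_rpow (by norm_num) hy0.le] at this
    have h2e : (2:ℝ) ^ (1 - α) ≤ 2 := by
      nth_rewrite 2 [show (2:ℝ) = 2 ^ (1:ℝ) by norm_num]
      exact Real.rpow_le_rpow_of_exponent_le (by norm_num) (by linarith)
    have hyp : y ^ (1 - α) = y * y ^ (-α) := by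
      rw [show (1:ℝ) - α = 1 + (-α) by ring, Real.rpow_add hy0, Real.rpow_one]
    calc (y + α) ^ (1 - α) ≤ (2:ℝ)^(1-α) * y ^ (1-α) := this
      _ ≤ 2 * y ^ (1 - α) := by
          have : (0:ℝ) ≤ y ^ (1-α) := Real.rpow_nonneg hy0.le _
          nlinarith
      _ = 2 * (y * y ^ (-α)) := by rw [hyp]
  -- target: ‖x^(k+1)/Γ(α(k+1)+1)‖ ≤ 1/2 * ‖x^k/Γ(αk+1)‖
  have harg : α * ((k:ℝ)+1) + 1 = y + α := by simp [hy_def]; ring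
  have hxk : (0:ℝ) < x ^ k := pow_pos hx k
  have hyna : 0 < y ^ (-α) := Real.rpow_pos_of_pos hy0 _
  rw [norm_div, norm_div, Real.norm_eq_abs, Real.norm_eq_abs, Real.norm_eq_abs, Real.norm_eq_abs,
    abs_pow, abs_pow, abs_of_pos hx]
  push_cast
  rw [harg, abs_of_pos hGα, abs_of_pos hG]
  have hstep : x * (y + α) ^ (1 - α) ≤ y / 2 := by
    have h1 : x * (y + α) ^ (1-α) ≤ x * (2 * (y * y ^ (-α))) :=
      mul_le_mul_of_nonneg_left hb1 hx.le
    have h2 : 4 * x * (α * (k:ℝ) + 1) ^ (-α) < 1/2 := hk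
    rw [← hy_def] at h2
    nlinarith
  have h4 : x * (y * Real.Gamma y) ≤ x * (Real.Gamma (y+α) * (y+α)^(1-α)) :=
    mul_le_mul_of_nonneg_left hkey hx.le
  have h5 : Real.Gamma (y+α) * (x * (y+α)^(1-α)) ≤ Real.Gamma (y+α) * (y/2) :=
    mul_le_mul_of_nonneg_left hstep hGα.le
  have h45 : x * (y * Real.Gamma y) ≤ Real.Gamma (y+α) * (y/2) := by
    calc x * (y * Real.Gamma y) ≤ x * (Real.Gamma (y+α) * (y+α)^(1-α)) := h4
      _ = Real.Gamma (y+α) * (x * (y+α)^(1-α)) := by ring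
      _ ≤ Real.Gamma (y+α) * (y/2) := h5
  have h6 : x * Real.Gamma y ≤ Real.Gamma (y+α) / 2 := by
    have h7 : (x * Real.Gamma y) * y ≤ (Real.Gamma (y+α) / 2) * y := by
      calc (x * Real.Gamma y) * y = x * (y * Real.Gamma y) := by ring
        _ ≤ Real.Gamma (y+α) * (y/2) := h45
        _ = (Real.Gamma (y+α) / 2) * y := by ring
    exact le_of_mul_le_mul_right h7 hy0
  have main : x ^ (k+1) * Real.Gamma y ≤ 1/2 * x^k * Real.Gamma (y+α) := by
    have h8 := mul_le_mul_of_nonneg_left h6 hxk.le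
    calc x ^ (k+1) * Real.Gamma y = x^k * (x * Real.Gamma y) := by ring
      _ ≤ x^k * (Real.Gamma (y+α) / 2) := h8
      _ = 1/2 * x^k * Real.Gamma (y+α) := by ring
  rw [div_le_iff₀ hGα,
    show 1/2*(x^k/Real.Gamma y)*Real.Gamma (y+α) = (1/2*x^k*Real.Gamma (y+α))/Real.Gamma y by ring,
    le_div_iff₀ hG]
  exact main

lemma integrableOn_exp_mul {p M c : ℝ} (hc : 0 < c) (hpc : c < p) (v : ℝ → ℝ)
    (hv : ContinuousOn v (Set.Ici 0)) (hbd : ∀ t, 0 ≤ t → |v t| ≤ M * Real.exp (c*t)) :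
    IntegrableOn (fun t => Real.exp (-p*t) * v t) (Set.Ioi 0) := by
  have hmaj : IntegrableOn (fun t => M * Real.exp (-(p-c)*t)) (Set.Ioi 0) :=
    (exp_neg_integrableOn_Ioi 0 (by linarith)).const_mul M
  apply Integrable.mono' hmaj
  · exact (((Real.continuous_exp.comp (continuous_const.mul continuous_id)).continuousOn).mul
      (hv.mono Set.Ioi_subset_Ici_self)).aestronglyMeasurable measurableSet_Ioi
  · filter_upwards [ae_restrict_mem measurableSet_Ioi] with t ht
    have ht0 : (0:ℝ) ≤ t := (Set.mem_Ioi.1 ht).le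
    have : ‖Real.exp (-p*t) * v t‖ = Real.exp (-p*t) * |v t| := by
      rw [norm_mul, Real.norm_eq_abs, Real.norm_eq_abs, abs_of_pos (Real.exp_pos _)]
    rw [this]
    calc Real.exp (-p*t) * |v t| ≤ Real.exp (-p*t) * (M * Real.exp (c*t)) :=
          mul_le_mul_of_nonneg_left (hbd t ht0) (Real.exp_pos _).le
      _ = M * Real.exp (-(p-c)*t) := by
          rw [mul_comm (Real.exp (-p*t)), mul_assoc, ← Real.exp_add,
            show c*t + -p*t = -(p-c)*t by ring]
  
lemma integrableOn_exp_rpow {p e : ℝ} (hp : 0 < p) (he : 0 ≤ e) :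
    IntegrableOn (fun r => Real.exp (-p*r) * r ^ e) (Set.Ioi 0) := by
  have h := integrableOn_rpow_mul_exp_neg_mul_rpow (by linarith : (-1:ℝ) < e) one_pos hp
  apply (h.congr_fun (fun x hx => ?_) measurableSet_Ioi)
  rw [Real.rpow_one]
  ring_nf

lemma integral_exp_rpow {p e : ℝ} (hp : 0 < p) (he : 0 ≤ e) :
    ∫ r in Set.Ioi (0:ℝ), Real.exp (-p*r) * r ^ e
      = Real.Gamma (e+1) * (1/p) ^ (e+1) := by
  have h := Real.integral_rpow_mul_exp_neg_mul_Ioi (by linarith : (0:ℝ) < e + 1) hp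
  rw [show e + 1 - 1 = e by ring] at h
  rw [mul_comm (Real.Gamma (e+1)), ← h]
  apply setIntegral_congr_fun measurableSet_Ioi
  intro x _
  simp only [neg_mul]
  ring

lemma laplace_deriv {u u' : ℝ → ℝ} {p M c : ℝ} (hc : 0 < c) (hpc : c < p)
    (hu : ∀ t ∈ Set.Ici (0:ℝ), HasDerivWithinAt u (u' t) (Set.Ici (0:ℝ)) t)
    (hubd : ∀ t, 0 ≤ t → |u t| ≤ M * Real.exp (c*t))
    (hint1 : IntegrableOn (fun t => Real.exp (-p*t) * u' t) (Set.Ioi 0))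
    (hint2 : IntegrableOn (fun t => Real.exp (-p*t) * u t) (Set.Ioi 0)) :
    ∫ t in Set.Ioi (0:ℝ), Real.exp (-p*t) * u' t
      = p * (∫ t in Set.Ioi (0:ℝ), Real.exp (-p*t) * u t) - u 0 := by
  set g' : ℝ → ℝ := fun t => Real.exp (-p*t) * u' t - p * (Real.exp (-p*t) * u t) with hg'
  have hcont : ContinuousWithinAt (fun t => Real.exp (-p*t) * u t) (Set.Ici 0) 0 :=
    ((Real.continuous_exp.comp (continuous_const.mul continuous_id)).continuousWithinAt).mul
      ((hu 0 Set.self_mem_Ici).continuousWithinAt)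
  have hderiv : ∀ x ∈ Set.Ioi (0:ℝ), HasDerivAt (fun t => Real.exp (-p*t) * u t) (g' x) x := by
    intro x hx
    have hux : HasDerivAt u (u' x) x :=
      (hu x (Set.mem_Ici.2 (le_of_lt hx))).hasDerivAt (Ici_mem_nhds hx)
    have h1 : HasDerivAt (fun t:ℝ => -p*t) (-p) x := by
      simpa using (hasDerivAt_id x).const_mul (-p)
    have h2 := h1.exp
    have h3 : HasDerivAt (fun t => Real.exp (-p*t) * u t) _ x := h2.mul hux
    convert h3 using 1
    simp only [hg']
    ring
  have hfint : IntegrableOn g' (Set.Ioi 0) := hint1.sub (hint2.const_mul p)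
  have htend : Tendsto (fun t => Real.exp (-p*t) * u t) atTop (nhds 0) := by
    apply squeeze_zero_norm' (a := fun t => M * Real.exp (-(p-c)*t))
    · filter_upwards [eventually_ge_atTop (0:ℝ)] with t ht
      rw [norm_mul, Real.norm_eq_abs, Real.norm_eq_abs, abs_of_pos (Real.exp_pos _)]
      calc Real.exp (-p*t) * |u t| ≤ Real.exp (-p*t) * (M * Real.exp (c*t)) :=
            mul_le_mul_of_nonneg_left (hubd t ht) (Real.exp_pos _).le
        _ = M * Real.exp (-(p-c)*t) := by
            rw [mul_comm (Real.exp (-p*t)), mul_assoc, ← Real.exp_add,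
              show c*t + -p*t = -(p-c)*t by ring]
    · have h1 : Tendsto (fun t:ℝ => -(p-c)*t) atTop atBot :=
        tendsto_const_mul_atBot_of_neg (by linarith) |>.2 tendsto_id
      have h2 := Real.tendsto_exp_atBot.comp h1
      have h3 := h2.const_mul M
      simpa using h3
  have key := integral_Ioi_of_hasDerivAt_of_tendsto hcont hderiv hfint htend
  have hsplit : ∫ x in Set.Ioi (0:ℝ), g' x
      = (∫ t in Set.Ioi (0:ℝ), Real.exp (-p*t) * u' t)
        - p * ∫ t in Set.Ioi (0:ℝ), Real.exp (-p*t) * u t := by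
    rw [hg', integral_sub hint1 (hint2.const_mul p), MeasureTheory.integral_const_mul]
  rw [hsplit] at key
  simp only [Real.exp_zero, mul_zero, neg_zero, one_mul, zero_sub] at key
  linarith [key]


/-- Laplace transform of the Atangana–Baleanu–Caputo fractional derivative
`(ABC D^α u)(t) = (B(α)/(1−α)) ∫_0^t u'(s) E_α(−(α/(1−α))(t−s)^α) ds`
of a continuously differentiable function `u` of exponential order:
`L[ABC D^α u](p) = B(α)(p^α ũ(p) − p^{α−1} u(0)) / ((1−α)p^α + α)`. -/
theorem laplace_abc_derivative
    (α : ℝ) (hα : α ∈ Set.Ioo (0 : ℝ) 1)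
    (B : ℝ) (hB : B = 1 - α + α / Real.Gamma α)
    (u u' : ℝ → ℝ)
    (hu : ∀ t ∈ Set.Ici (0 : ℝ), HasDerivWithinAt u (u' t) (Set.Ici (0 : ℝ)) t)
    (hu' : ContinuousOn u' (Set.Ici (0 : ℝ)))
    (M c : ℝ) (hM : 0 < M) (hc : 0 < c)
    (hubd : ∀ t : ℝ, 0 ≤ t → |u t| ≤ M * Real.exp (c * t))
    (hu'bd : ∀ t : ℝ, 0 ≤ t → |u' t| ≤ M * Real.exp (c * t))
    (E : ℝ → ℝ) (hE : ∀ z : ℝ, E z = ∑' k : ℕ, z ^ k / Real.Gamma (α * k + 1))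
    (D : ℝ → ℝ)
    (hD : ∀ t : ℝ, D t
        = (B / (1 - α)) * ∫ s in (0 : ℝ)..t, u' s * E (-(α / (1 - α)) * (t - s) ^ α))
    (p : ℝ) (hpc : c < p) (hpα : α / (1 - α) < p ^ α) :
    ∫ t in Set.Ioi (0 : ℝ), Real.exp (-p * t) * D t
      = B * (p ^ α * (∫ t in Set.Ioi (0 : ℝ), Real.exp (-p * t) * u t)
          - p ^ (α - 1) * u 0) / ((1 - α) * p ^ α + α) := by
  obtain ⟨hα0, hα1⟩ := hα
  have h1α : (0:ℝ) < 1 - α := by linarith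
  have hp : (0:ℝ) < p := hc.trans hpc
  set l : ℝ := α / (1 - α) with hl_def
  have hl : 0 < l := div_pos hα0 h1α
  have hpa : (0:ℝ) < p ^ α := Real.rpow_pos_of_pos hp α
  have hr0 : l / p ^ α < 1 := (div_lt_one hpa).2 hpα
  have hr0' : 0 ≤ l / p ^ α := div_nonneg hl.le hpa.le
  have hucont : ContinuousOn u (Set.Ici 0) := fun t ht => (hu t ht).continuousWithinAt
  set f : ℝ → ℝ := fun t => Real.exp (-p*t) * u' t with hf_def
  set g : ℕ → ℝ → ℝ := fun k r => Real.exp (-p*r) * r ^ (α * (k:ℝ)) with hg_def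
  have hfint : IntegrableOn f (Set.Ioi 0) := integrableOn_exp_mul hc hpc u' hu' hu'bd
  have huint : IntegrableOn (fun t => Real.exp (-p*t) * u t) (Set.Ioi 0) :=
    integrableOn_exp_mul hc hpc u hucont hubd
  have hgint : ∀ k : ℕ, IntegrableOn (g k) (Set.Ioi 0) :=
    fun k => integrableOn_exp_rpow hp (by positivity)
  have hgval : ∀ k : ℕ, ∫ r in Set.Ioi (0:ℝ), g k r
      = Real.Gamma (α * k + 1) * (1/p) ^ (α * k + 1) :=
    fun k => integral_exp_rpow hp (by positivity)
  have hGpos : ∀ k : ℕ, (0:ℝ) < Real.Gamma (α * k + 1) :=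
    fun k => Real.Gamma_pos_of_pos (by positivity)
  set c' : ℕ → ℝ := fun k => (-l)^k / Real.Gamma (α * k + 1) with hc'_def
  have hc'abs : ∀ k : ℕ, |c' k| = l^k / Real.Gamma (α * k + 1) := by
    intro k
    rw [hc'_def, abs_div, abs_pow, abs_neg, abs_of_pos hl, abs_of_pos (hGpos k)]
  set J : ℕ → ℝ → ℝ := fun k x => ∫ t in (0:ℝ)..x, f t * g k (x - t) with hJ_def
  -- step 2: pointwise series expansion
  have hpt : ∀ x ∈ Set.Ioi (0:ℝ),
      Real.exp (-p*x) * (∫ s in (0:ℝ)..x, u' s * E (-l * (x - s) ^ α))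
        = ∑' k : ℕ, c' k * J k x := by
    intro x hx
    have hx0 : (0:ℝ) < x := hx
    have h2a : ∀ k : ℕ, J k x
        = Real.exp (-p*x) * ∫ s in Set.Ioc (0:ℝ) x, u' s * (x-s)^(α*(k:ℝ)) := by
      intro k
      have heq : ∀ t:ℝ, f t * g k (x - t)
          = Real.exp (-p*x) * (u' t * (x-t)^(α*(k:ℝ))) := by
        intro t
        simp only [hf_def, hg_def]
        rw [show (Real.exp (-p*t) * u' t) * (Real.exp (-p*(x-t)) * (x-t)^(α*(k:ℝ)))
            = (Real.exp (-p*t) * Real.exp (-p*(x-t))) * (u' t * (x-t)^(α*(k:ℝ))) from by ring,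
          ← Real.exp_add, show -p*t + -p*(x-t) = -p*x from by ring]
      rw [hJ_def]
      simp only
      simp_rw [heq]
      rw [intervalIntegral.integral_const_mul, intervalIntegral.integral_of_le hx0.le]
    have hEser : ∀ s ∈ Set.Ioc (0:ℝ) x,
        u' s * E (-l * (x - s)^α) = ∑' k : ℕ, c' k * (u' s * (x-s)^(α*(k:ℝ))) := by
      intro s hs
      have hxs : (0:ℝ) ≤ x - s := sub_nonneg.2 hs.2
      rw [hE, ← tsum_mul_left]
      apply tsum_congr
      intro k
      have hzk : (-l * (x-s)^α)^k = (-l)^k * (x-s)^(α*(k:ℝ)) := by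
        rw [mul_pow, Real.rpow_mul hxs, Real.rpow_natCast]
      rw [hzk, hc'_def]
      ring
    have hmeask : ∀ k:ℕ, AEStronglyMeasurable
        (fun s => c' k * (u' s * (x-s)^(α*(k:ℝ)))) (volume.restrict (Set.Ioc 0 x)) := by
      intro k
      have hm1 : AEStronglyMeasurable u' (volume.restrict (Set.Ioc 0 x)) :=
        (hu'.mono (fun s hs => hs.1.le)).aestronglyMeasurable measurableSet_Ioc
      have hm2 : Continuous (fun s:ℝ => (x - s)^(α*(k:ℝ))) :=
        (Real.continuous_rpow_const (by positivity)).comp (continuous_const.sub continuous_id)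
      exact (hm1.mul hm2.aestronglyMeasurable).const_mul _
    set bnd : ℕ → ℝ := fun k =>
      (l^k / Real.Gamma (α*k+1)) * (M * Real.exp (c*x) * x^(α*(k:ℝ))) * x with hbnd_def
    have hbd : ∀ k:ℕ, ∀ s ∈ Set.Ioc (0:ℝ) x, ‖c' k * (u' s * (x-s)^(α*(k:ℝ)))‖
        ≤ (l^k / Real.Gamma (α*k+1)) * (M * Real.exp (c*x) * x^(α*(k:ℝ))) := by
      intro k s hs
      have hs0 : 0 < s := hs.1
      have hsx : s ≤ x := hs.2
      have hxs : (0:ℝ) ≤ x - s := by linarith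
      rw [norm_mul, norm_mul, Real.norm_eq_abs, Real.norm_eq_abs, Real.norm_eq_abs, hc'abs]
      have e1 : |u' s| ≤ M * Real.exp (c*x) := by
        refine (hu'bd s hs0.le).trans ?_
        have : Real.exp (c*s) ≤ Real.exp (c*x) := Real.exp_le_exp.2 (by nlinarith)
        nlinarith [hM.le, (Real.exp_pos (c*s)).le]
      have e2 : |(x-s)^(α*(k:ℝ))| ≤ x^(α*(k:ℝ)) := by
        rw [abs_of_nonneg (Real.rpow_nonneg hxs _)]
        exact Real.rpow_le_rpow hxs (by linarith) (by positivity)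
      exact mul_le_mul_of_nonneg_left
        (mul_le_mul e1 e2 (abs_nonneg _) (by positivity)) (by positivity)
    have hlib : ∀ k:ℕ, ∫⁻ s in Set.Ioc (0:ℝ) x, ‖c' k * (u' s * (x-s)^(α*(k:ℝ)))‖₊
        ≤ ENNReal.ofReal (bnd k) := by
      intro k
      calc ∫⁻ s in Set.Ioc (0:ℝ) x, (‖c' k * (u' s * (x-s)^(α*(k:ℝ)))‖₊ : ENNReal)
          ≤ ∫⁻ _s in Set.Ioc (0:ℝ) x, ENNReal.ofReal
              ((l^k / Real.Gamma (α*k+1)) * (M * Real.exp (c*x) * x^(α*(k:ℝ)))) := by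
            apply lintegral_mono_ae
            filter_upwards [ae_restrict_mem measurableSet_Ioc] with s hs
            rw [← ENNReal.ofReal_coe_nnreal, coe_nnnorm]
            exact ENNReal.ofReal_le_ofReal (hbd k s hs)
        _ = ENNReal.ofReal ((l^k / Real.Gamma (α*k+1)) * (M * Real.exp (c*x) * x^(α*(k:ℝ))))
              * volume (Set.Ioc (0:ℝ) x) := setLIntegral_const _ _
        _ = ENNReal.ofReal (bnd k) := by
            rw [Real.volume_Ioc, sub_zero, ← ENNReal.ofReal_mul (by positivity), hbnd_def]
    have hS : Summable bnd := by
      have hS0 := summable_ml (Set.mem_Ioo.2 ⟨hα0, hα1⟩)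
        (show (0:ℝ) ≤ l * x^α by positivity)
      apply ((hS0.mul_right (M * Real.exp (c*x) * x)).congr ?_)
      intro k
      rw [hbnd_def]
      simp only
      rw [mul_pow, show ((x^α:ℝ))^k = x^(α*(k:ℝ)) from by
        rw [Real.rpow_mul hx0.le, Real.rpow_natCast]]
      field_simp
    have hsumk : ∑' k:ℕ, ∫⁻ s in Set.Ioc (0:ℝ) x,
        ‖c' k * (u' s * (x-s)^(α*(k:ℝ)))‖₊ ≠ ⊤ := by
      refine ne_top_of_le_ne_top ?_ (ENNReal.tsum_le_tsum hlib)
      rw [← ENNReal.ofReal_tsum_of_nonneg (fun k => by positivity) hS]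
      exact ENNReal.ofReal_ne_top
    calc Real.exp (-p*x) * ∫ s in (0:ℝ)..x, u' s * E (-l * (x - s) ^ α)
        = Real.exp (-p*x) * ∫ s in Set.Ioc (0:ℝ) x, u' s * E (-l * (x - s) ^ α) := by
          rw [intervalIntegral.integral_of_le hx0.le]
      _ = Real.exp (-p*x) * ∫ s in Set.Ioc (0:ℝ) x,
            ∑' k : ℕ, c' k * (u' s * (x-s)^(α*(k:ℝ))) := by
          rw [setIntegral_congr_fun measurableSet_Ioc hEser]
      _ = Real.exp (-p*x) * ∑' k : ℕ,
            c' k * ∫ s in Set.Ioc (0:ℝ) x, u' s * (x-s)^(α*(k:ℝ)) := by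
          rw [integral_tsum hmeask hsumk]
          congr 1
          exact tsum_congr fun k => MeasureTheory.integral_const_mul _ _
      _ = ∑' k : ℕ, c' k * (Real.exp (-p*x) * ∫ s in Set.Ioc (0:ℝ) x,
            u' s * (x-s)^(α*(k:ℝ))) := by
          rw [← tsum_mul_left]
          exact tsum_congr fun k => by ring
      _ = ∑' k : ℕ, c' k * J k x := tsum_congr fun k => by rw [h2a k]
  -- step 3: outer swap ingredients
  have hmeas2 : ∀ k : ℕ, AEStronglyMeasurable (fun x => c' k * J k x)
      (volume.restrict (Set.Ioi 0)) := by
    intro k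
    have hPC : Integrable (posConvolution f (g k) (ContinuousLinearMap.mul ℝ ℝ) volume) volume :=
      integrable_posConvolution hfint (hgint k) _
    have heq : ∀ x ∈ Set.Ioi (0:ℝ),
        posConvolution f (g k) (ContinuousLinearMap.mul ℝ ℝ) volume x = J k x := by
      intro x hx
      simp only [posConvolution, Set.indicator_of_mem hx, ContinuousLinearMap.mul_apply',
        hJ_def]
    refine AEStronglyMeasurable.const_mul ?_ _
    exact (hPC.aestronglyMeasurable.restrict).congr
      (by filter_upwards [ae_restrict_mem measurableSet_Ioi] with x hx using heq x hx)
  have hpow1 : ∀ k : ℕ, ((1:ℝ)/p) ^ (α * (k:ℝ) + 1) = ((p^α)⁻¹)^k * (1/p) := by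
    intro k
    rw [Real.rpow_add (by positivity : (0:ℝ) < 1/p), Real.rpow_one,
      Real.rpow_mul (by positivity : (0:ℝ) ≤ 1/p), Real.rpow_natCast,
      one_div, Real.inv_rpow hp.le]
  have hsum2 : ∑' k : ℕ, ∫⁻ x in Set.Ioi (0:ℝ), ‖c' k * J k x‖₊ ≠ ⊤ := by
    have hfabs : IntegrableOn (fun t => |f t|) (Set.Ioi 0) := hfint.abs
    set Φ : ℝ := ∫ t in Set.Ioi (0:ℝ), |f t| with hΦ_def
    have hΦ0 : 0 ≤ Φ := setIntegral_nonneg measurableSet_Ioi (fun t _ => abs_nonneg _)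
    set Q : ℕ → ℝ → ℝ := fun k =>
      posConvolution (fun t => |f t|) (g k) (ContinuousLinearMap.mul ℝ ℝ) volume with hQ_def
    have hQint : ∀ k, Integrable (Q k) volume :=
      fun k => integrable_posConvolution hfabs (hgint k) _
    have hgnn : ∀ k : ℕ, ∀ y : ℝ, ∀ t ∈ Set.Icc (0:ℝ) y, 0 ≤ g k (y - t) := by
      intro k y t ht
      exact mul_nonneg (Real.exp_pos _).le
        (Real.rpow_nonneg (by linarith [ht.2] : (0:ℝ) ≤ y - t) _)
    have hQnn : ∀ k : ℕ, ∀ x : ℝ, 0 ≤ Q k x := by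
      intro k x
      rw [hQ_def]
      simp only [posConvolution]
      apply Set.indicator_nonneg
      intro y hy
      simp only [ContinuousLinearMap.mul_apply']
      exact intervalIntegral.integral_nonneg (le_of_lt hy)
        (fun t ht => mul_nonneg (abs_nonneg _) (hgnn k y t ht))
    have hJle : ∀ k : ℕ, ∀ x ∈ Set.Ioi (0:ℝ), ‖c' k * J k x‖ ≤ |c' k| * Q k x := by
      intro k x hx
      have hx0 : (0:ℝ) < x := hx
      rw [norm_mul, Real.norm_eq_abs, Real.norm_eq_abs]
      have hQx : Q k x = ∫ t in (0:ℝ)..x, |f t| * g k (x - t) := by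
        rw [hQ_def]
        simp only [posConvolution, Set.indicator_of_mem hx, ContinuousLinearMap.mul_apply']
      have hJQ : |J k x| ≤ Q k x := by
        rw [hQx, hJ_def]
        simp only
        rw [← Real.norm_eq_abs]
        refine (intervalIntegral.norm_integral_le_integral_norm hx0.le).trans_eq ?_
        apply intervalIntegral.integral_congr
        intro t ht
        rw [Set.uIcc_of_le hx0.le] at ht
        simp only [norm_mul, Real.norm_eq_abs]
        rw [abs_of_nonneg (hgnn k x t ht)]
      exact mul_le_mul_of_nonneg_left hJQ (abs_nonneg _)
    have hQval : ∀ k : ℕ, ∫ x in Set.Ioi (0:ℝ), Q k x = Φ * ∫ r in Set.Ioi (0:ℝ), g k r := by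
      intro k
      have h := integral_posConvolution hfabs (hgint k) (ContinuousLinearMap.mul ℝ ℝ)
      rw [show ∫ x in Set.Ioi (0:ℝ), Q k x
          = ∫ x in Set.Ioi (0:ℝ), ∫ t in (0:ℝ)..x,
              (ContinuousLinearMap.mul ℝ ℝ) (|f t|) (g k (x - t)) from
        setIntegral_congr_fun measurableSet_Ioi (fun x hx => by
          rw [hQ_def]; simp only [posConvolution, Set.indicator_of_mem hx])]
      simpa using h
    have hlib2 : ∀ k : ℕ, ∫⁻ x in Set.Ioi (0:ℝ), (‖c' k * J k x‖₊ : ENNReal)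
        ≤ ENNReal.ofReal ((Φ * (1/p)) * (l/p^α)^k) := by
      intro k
      calc ∫⁻ x in Set.Ioi (0:ℝ), (‖c' k * J k x‖₊ : ENNReal)
          ≤ ∫⁻ x in Set.Ioi (0:ℝ), ENNReal.ofReal (|c' k| * Q k x) := by
            apply lintegral_mono_ae
            filter_upwards [ae_restrict_mem measurableSet_Ioi] with x hx
            rw [← ENNReal.ofReal_coe_nnreal, coe_nnnorm]
            exact ENNReal.ofReal_le_ofReal (hJle k x hx)
        _ = ENNReal.ofReal (∫ x in Set.Ioi (0:ℝ), |c' k| * Q k x) := by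
            rw [ofReal_integral_eq_lintegral_ofReal
              (((hQint k).const_mul _).restrict)
              (Filter.Eventually.of_forall fun x => mul_nonneg (abs_nonneg _) (hQnn k x))]
        _ = ENNReal.ofReal ((Φ * (1/p)) * (l/p^α)^k) := by
            rw [MeasureTheory.integral_const_mul, hQval k, hgval k, hc'abs k, hpow1 k]
            congr 1
            rw [div_pow]
            field_simp [(hGpos k).ne']
            ring_nf
            have hone : ((1-α):ℝ)⁻¹ ^ k * (1-α)^k = 1 := by
              rw [inv_pow, inv_mul_cancel₀ (pow_ne_zero k h1α.ne')]
            rw [hl_def, div_pow, mul_assoc _ (α^k / (1-α)^k), div_mul_cancel₀ _ (pow_ne_zero k h1α.ne')]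
            ring
    have hSg : Summable (fun k : ℕ => (Φ*(1/p)) * (l/p^α)^k) :=
      (summable_geometric_of_lt_one hr0' hr0).mul_left _
    refine ne_top_of_le_ne_top ?_ (ENNReal.tsum_le_tsum hlib2)
    rw [← ENNReal.ofReal_tsum_of_nonneg
      (fun k => mul_nonneg (mul_nonneg hΦ0 (by positivity)) (pow_nonneg hr0' k)) hSg]
    exact ENNReal.ofReal_ne_top
  have hconv : ∀ k : ℕ, ∫ x in Set.Ioi (0:ℝ), J k x
      = (∫ t in Set.Ioi (0:ℝ), f t) * ∫ r in Set.Ioi (0:ℝ), g k r := by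
    intro k
    have h := integral_posConvolution hfint (hgint k) (ContinuousLinearMap.mul ℝ ℝ)
    simpa using h
  -- assemble
  have hA : ∫ t in Set.Ioi (0:ℝ), f t
      = p * (∫ t in Set.Ioi (0:ℝ), Real.exp (-p*t) * u t) - u 0 :=
    laplace_deriv hc hpc hu hubd hfint huint
  set U : ℝ := ∫ t in Set.Ioi (0:ℝ), Real.exp (-p*t) * u t with hU_def
  have step1 : ∫ t in Set.Ioi (0:ℝ), Real.exp (-p*t) * D t
      = (B/(1-α)) * ∑' k : ℕ, c' k * ((p * U - u 0) * (Real.Gamma (α * k + 1) * (1/p) ^ (α * k + 1))) := by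
    rw [show ∫ t in Set.Ioi (0:ℝ), Real.exp (-p*t) * D t
        = ∫ x in Set.Ioi (0:ℝ), (B/(1-α)) * (∑' k : ℕ, c' k * J k x) from
      setIntegral_congr_fun measurableSet_Ioi (fun x hx => by
        rw [hD x, ← hpt x hx]; ring), MeasureTheory.integral_const_mul]
    rw [integral_tsum hmeas2 hsum2]
    congr 1
    apply tsum_congr
    intro k
    rw [MeasureTheory.integral_const_mul, hconv k, hgval k, hA]
  rw [step1]
  have hterm : ∀ k : ℕ, c' k * ((p * U - u 0) * (Real.Gamma (α * k + 1) * (1/p) ^ (α * k + 1)))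
      = ((p * U - u 0)/p) * (-(l/p^α))^k := by
    intro k
    have h1 : ((1:ℝ)/p) ^ (α * (k:ℝ) + 1) = ((p^α)⁻¹)^k * (1/p) := by
      rw [Real.rpow_add (by positivity : (0:ℝ) < 1/p), Real.rpow_one,
        Real.rpow_mul (by positivity : (0:ℝ) ≤ 1/p), Real.rpow_natCast,
        one_div, Real.inv_rpow hp.le]
    rw [hc'_def, h1]
    field_simp [(hGpos k).ne']
    ring
  rw [tsum_congr hterm, tsum_mul_left, tsum_geometric_of_norm_lt_one (by
    rw [Real.norm_eq_abs, abs_neg, abs_of_nonneg hr0']; exact hr0)]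
  have hpam : p^(α-1) = p^α/p := by rw [Real.rpow_sub hp, Real.rpow_one]
  have hden : ((1-α)*p^α + α) ≠ 0 := by positivity
  have h1q : 1 - (-(l/p^α)) = ((1-α)*p^α+α)/((1-α)*p^α) := by
    rw [hl_def]
    field_simp
    ring
  rw [h1q, hpam]
  have hne : ((1-α)*p^α) ≠ 0 := by positivity
  field_simp
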